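/- Let 𝒜 be a unital C*-algebra, let a, b ∈ 𝒜 be positive elements, and let t ∈ (1/2, 1). Then ‖a^t b^(1-t) + b^t a^(1-t)‖ ≤ ‖a + b‖^(1/2) · ‖b^(1-t) a^(2t-1) b^(1-t) + a^(1-t) b^(2t-1) a^(1-t)‖^(1/2). -/

import Mathlib

/-- Auxiliary: `a^x * a^y = a^(x+y)` for a nonnegative element and positive exponents. -/
lemma bridge_aux_rpow_add {A : Type*} [CStarAlgebra A]
    [PartialOrder A] [StarOrderedRing A] (a : A) (ha : 0 ≤ a)
    (x y : ℝ) (hx : 0 < x) (hy : 0 < y) :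
    CFC.rpow a x * CFC.rpow a y = CFC.rpow a (x + y) := by
  unfold CFC.rpow
  rw [← cfc_mul _ _ a (NNReal.continuousOn_rpow_const (.inr hx.le))
    (NNReal.continuousOn_rpow_const (.inr hy.le))]
  exact cfc_congr fun z _ => (NNReal.rpow_add' (by positivity) z).symm

/-- Auxiliary 2-term operator Cauchy–Schwarz inequality in a unital C*-algebra. -/
lemma bridge_aux_cs2 {A : Type*} [CStarAlgebra A] [PartialOrder A] [StarOrderedRing A]
    (x₁ x₂ y₁ y₂ : A) :
    ‖x₁ * y₁ + x₂ * y₂‖ * ‖x₁ * y₁ + x₂ * y₂‖ ≤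
      ‖x₁ * star x₁ + x₂ * star x₂‖ * ‖star y₁ * y₁ + star y₂ * y₂‖ := by
  set X := x₁ * y₁ + x₂ * y₂ with hX
  set c := x₁ * star x₁ + x₂ * star x₂ with hc
  set D := star y₁ * y₁ + star y₂ * y₂ with hD
  have hc_nonneg : 0 ≤ c := add_nonneg (mul_star_self_nonneg x₁) (mul_star_self_nonneg x₂)
  have hD_nonneg : 0 ≤ D := add_nonneg (star_mul_self_nonneg y₁) (star_mul_self_nonneg y₂)
  set C := ‖c‖ with hC
  rcases eq_or_lt_of_le (norm_nonneg c) with hC0 | hC0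
  · -- c = 0, so x₁ = x₂ = 0, so X = 0
    have hc0 : c = 0 := by rw [← norm_eq_zero, ← hC0]
    have h1 : x₁ = 0 := by
      have hle : ‖x₁‖ * ‖x₁‖ ≤ 0 := by
        calc ‖x₁‖ * ‖x₁‖ = ‖x₁ * star x₁‖ := (CStarRing.norm_self_mul_star).symm
          _ ≤ ‖c‖ := CStarAlgebra.norm_le_norm_of_nonneg_of_le (mul_star_self_nonneg x₁)
              (le_add_of_nonneg_right (mul_star_self_nonneg x₂))
          _ = 0 := by rw [hc0, norm_zero]
      have : ‖x₁‖ = 0 := by nlinarith [norm_nonneg x₁]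
      rwa [norm_eq_zero] at this
    have h2 : x₂ = 0 := by
      have hle : ‖x₂‖ * ‖x₂‖ ≤ 0 := by
        calc ‖x₂‖ * ‖x₂‖ = ‖x₂ * star x₂‖ := (CStarRing.norm_self_mul_star).symm
          _ ≤ ‖c‖ := CStarAlgebra.norm_le_norm_of_nonneg_of_le (mul_star_self_nonneg x₂)
              (le_add_of_nonneg_left (mul_star_self_nonneg x₁))
          _ = 0 := by rw [hc0, norm_zero]
      have : ‖x₂‖ = 0 := by nlinarith [norm_nonneg x₂]
      rwa [norm_eq_zero] at this
    rw [hX, h1, h2]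
    simpa using mul_nonneg (norm_nonneg c) (norm_nonneg D)
  · -- main case
    set z₁ := star x₁ * X - C • y₁ with hz₁
    set z₂ := star x₂ * X - C • y₂ with hz₂
    have h0 : (0 : A) ≤ star z₁ * z₁ + star z₂ * z₂ :=
      add_nonneg (star_mul_self_nonneg z₁) (star_mul_self_nonneg z₂)
    have hT : star z₁ * z₁ + star z₂ * z₂ =
        star X * c * X + (C * C) • D - (C • (star X * X) + C • (star X * X)) := by
      rw [hz₁, hz₂, hc, hD, hX]
      simp only [star_sub, star_mul, star_smul, star_star, star_trivial, mul_sub, sub_mul,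
        smul_mul_assoc, mul_smul_comm, smul_smul, mul_add, add_mul, smul_sub, smul_add,
        star_add, mul_assoc]
      abel
    have hconj : star X * c * X ≤ C • (star X * X) :=
      CStarAlgebra.star_left_conjugate_le_norm_smul (hc_nonneg.isSelfAdjoint)
    have key : C • (star X * X) ≤ (C * C) • D := by
      rw [hT, sub_nonneg] at h0
      have h1 := h0.trans (add_le_add_left hconj ((C * C) • D))
      exact le_of_add_le_add_left h1
    have hPn : (0 : A) ≤ C • (star X * X) := smul_nonneg hC0.le (star_mul_self_nonneg X)
    have hnorm := CStarAlgebra.norm_le_norm_of_nonneg_of_le hPn key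
    rw [norm_smul, norm_smul, Real.norm_of_nonneg hC0.le, Real.norm_of_nonneg (by positivity),
      CStarRing.norm_star_mul_self] at hnorm
    nlinarith [norm_nonneg D]

/-- **Bridge inequality (operator-norm case).** For positive elements `a, b` of a
unital C*-algebra and `t ∈ (1/2, 1)`,
`‖a^t b^(1-t) + b^t a^(1-t)‖ ≤ ‖a+b‖^(1/2) * ‖b^(1-t) a^(2t-1) b^(1-t) + a^(1-t) b^(2t-1) a^(1-t)‖^(1/2)`,
with real powers via the continuous functional calculus. -/
theorem bridge_inequality_cstar {A : Type*} [CStarAlgebra A]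
    [PartialOrder A] [StarOrderedRing A]
    (a b : A) (ha : 0 ≤ a) (hb : 0 ≤ b) (t : ℝ)
    (ht : t ∈ Set.Ioo (1 / 2 : ℝ) 1) :
    ‖CFC.rpow a t * CFC.rpow b (1 - t) + CFC.rpow b t * CFC.rpow a (1 - t)‖ ≤
      ‖a + b‖ ^ (1 / 2 : ℝ) *
        ‖CFC.rpow b (1 - t) * CFC.rpow a (2 * t - 1) * CFC.rpow b (1 - t) +
          CFC.rpow a (1 - t) * CFC.rpow b (2 * t - 1) * CFC.rpow a (1 - t)‖ ^ (1 / 2 : ℝ) := by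
  obtain ⟨ht1, ht2⟩ := ht
  have hs : (0 : ℝ) < t - 1 / 2 := by linarith
  have h1t : (0 : ℝ) < 1 - t := by linarith
  set x₁ := CFC.rpow a (1 / 2 : ℝ) with hx₁
  set x₂ := CFC.rpow b (1 / 2 : ℝ) with hx₂
  set y₁ := CFC.rpow a (t - 1 / 2) * CFC.rpow b (1 - t) with hy₁
  set y₂ := CFC.rpow b (t - 1 / 2) * CFC.rpow a (1 - t) with hy₂
  have hsx₁ : star x₁ = x₁ := (IsSelfAdjoint.of_nonneg CFC.rpow_nonneg)
  have hsx₂ : star x₂ = x₂ := (IsSelfAdjoint.of_nonneg CFC.rpow_nonneg)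
  -- identify the pieces
  have e₁ : x₁ * y₁ = CFC.rpow a t * CFC.rpow b (1 - t) := by
    rw [hx₁, hy₁, ← mul_assoc, bridge_aux_rpow_add a ha _ _ (by norm_num) hs]
    norm_num
  have e₂ : x₂ * y₂ = CFC.rpow b t * CFC.rpow a (1 - t) := by
    rw [hx₂, hy₂, ← mul_assoc, bridge_aux_rpow_add b hb _ _ (by norm_num) hs]
    norm_num
  have e₃ : x₁ * star x₁ + x₂ * star x₂ = a + b := by
    rw [hsx₁, hsx₂, hx₁, hx₂, bridge_aux_rpow_add a ha _ _ (by norm_num) (by norm_num),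
      bridge_aux_rpow_add b hb _ _ (by norm_num) (by norm_num)]
    norm_num
    rw [CFC.rpow_one a ha, CFC.rpow_one b hb]
  have e₄ : star y₁ * y₁ = CFC.rpow b (1 - t) * CFC.rpow a (2 * t - 1) * CFC.rpow b (1 - t) := by
    rw [hy₁, star_mul, (IsSelfAdjoint.of_nonneg CFC.rpow_nonneg : star (CFC.rpow b (1-t)) = _),
      (IsSelfAdjoint.of_nonneg CFC.rpow_nonneg : star (CFC.rpow a (t - 1/2)) = _)]
    calc CFC.rpow b (1 - t) * CFC.rpow a (t - 1 / 2) *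
          (CFC.rpow a (t - 1 / 2) * CFC.rpow b (1 - t))
        = CFC.rpow b (1 - t) * (CFC.rpow a (t - 1 / 2) * CFC.rpow a (t - 1 / 2)) *
            CFC.rpow b (1 - t) := by noncomm_ring
      _ = _ := by rw [bridge_aux_rpow_add a ha _ _ hs hs]; ring_nf
  have e₅ : star y₂ * y₂ = CFC.rpow a (1 - t) * CFC.rpow b (2 * t - 1) * CFC.rpow a (1 - t) := by
    rw [hy₂, star_mul, (IsSelfAdjoint.of_nonneg CFC.rpow_nonneg : star (CFC.rpow a (1-t)) = _),
      (IsSelfAdjoint.of_nonneg CFC.rpow_nonneg : star (CFC.rpow b (t - 1/2)) = _)]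
    calc CFC.rpow a (1 - t) * CFC.rpow b (t - 1 / 2) *
          (CFC.rpow b (t - 1 / 2) * CFC.rpow a (1 - t))
        = CFC.rpow a (1 - t) * (CFC.rpow b (t - 1 / 2) * CFC.rpow b (t - 1 / 2)) *
            CFC.rpow a (1 - t) := by noncomm_ring
      _ = _ := by rw [bridge_aux_rpow_add b hb _ _ hs hs]; ring_nf
  have hcs := bridge_aux_cs2 x₁ x₂ y₁ y₂
  rw [e₁, e₂, e₃, e₄, e₅] at hcs
  set L := ‖CFC.rpow a t * CFC.rpow b (1 - t) + CFC.rpow b t * CFC.rpow a (1 - t)‖ with hL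
  set R₁ := ‖a + b‖ with hR₁
  set R₂ := ‖CFC.rpow b (1 - t) * CFC.rpow a (2 * t - 1) * CFC.rpow b (1 - t) +
      CFC.rpow a (1 - t) * CFC.rpow b (2 * t - 1) * CFC.rpow a (1 - t)‖ with hR₂
  have hL0 : 0 ≤ L := norm_nonneg _
  have hR₁0 : 0 ≤ R₁ := norm_nonneg _
  have hR₂0 : 0 ≤ R₂ := norm_nonneg _
  calc L = (L * L) ^ (1 / 2 : ℝ) := by
        rw [← Real.sqrt_eq_rpow, Real.sqrt_mul_self hL0]
    _ ≤ (R₁ * R₂) ^ (1 / 2 : ℝ) := Real.rpow_le_rpow (by positivity) hcs (by norm_num)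
    _ = R₁ ^ (1 / 2 : ℝ) * R₂ ^ (1 / 2 : ℝ) := Real.mul_rpow hR₁0 hR₂0
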